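/- For sequences of positive reals (a_n) and (b_n) with a_n, b_n ≥ 2 for all n, if lim (log₂ log₂ a_n)/(log₂ n) = A and lim (log₂ log₂ b_n)/(log₂ n) = B both exist, then lim (log₂ log₂ (a_n · b_n))/(log₂ n) = max(A, B). -/

import Mathlib

open Filter Real

/-- For sequences of reals `(a_n)`, `(b_n)` with `a_n, b_n ≥ 2`, if
`(log₂ log₂ a_n)/(log₂ n) → A` and `(log₂ log₂ b_n)/(log₂ n) → B`, then
`(log₂ log₂ (a_n·b_n))/(log₂ n) → max A B`. -/
theorem loglog_prod_tendsto_max (a b : ℕ → ℝ) (A B : ℝ)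
    (ha2 : ∀ n, 2 ≤ a n) (hb2 : ∀ n, 2 ≤ b n)
    (hA : Tendsto (fun n : ℕ => logb 2 (logb 2 (a n)) / logb 2 n) atTop (nhds A))
    (hB : Tendsto (fun n : ℕ => logb 2 (logb 2 (b n)) / logb 2 n) atTop (nhds B)) :
    Tendsto (fun n : ℕ => logb 2 (logb 2 (a n * b n)) / logb 2 n) atTop (nhds (max A B)) := by
  have h2 : (1:ℝ) < 2 := one_lt_two
  have hL : Tendsto (fun n : ℕ => logb 2 (n : ℝ)) atTop atTop :=
    (Real.tendsto_logb_atTop h2).comp tendsto_natCast_atTop_atTop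
  have hinv : Tendsto (fun n : ℕ => 1 / logb 2 (n : ℝ)) atTop (nhds 0) := by
    exact hL.inv_tendsto_atTop.congr (fun n => (one_div _).symm)
  have hlow : Tendsto (fun n : ℕ => max (logb 2 (logb 2 (a n)) / logb 2 n)
      (logb 2 (logb 2 (b n)) / logb 2 n)) atTop (nhds (max A B)) := hA.max hB
  have hup : Tendsto (fun n : ℕ => max (logb 2 (logb 2 (a n)) / logb 2 n)
      (logb 2 (logb 2 (b n)) / logb 2 n) + 1 / logb 2 (n : ℝ)) atTop (nhds (max A B)) := by
    simpa using hlow.add hinv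
  refine tendsto_of_tendsto_of_tendsto_of_le_of_le' hlow hup ?_ ?_
  · filter_upwards [eventually_ge_atTop 2] with n hn
    have hn1 : (1:ℝ) < n := by exact_mod_cast Nat.lt_of_lt_of_le one_lt_two hn
    have hLpos : 0 < logb 2 (n : ℝ) := Real.logb_pos h2 hn1
    have hu : (1:ℝ) ≤ logb 2 (a n) := by
      have := Real.logb_le_logb_of_le h2 (by norm_num : (0:ℝ) < 2) (ha2 n)
      simpa using this
    have hv : (1:ℝ) ≤ logb 2 (b n) := by
      have := Real.logb_le_logb_of_le h2 (by norm_num : (0:ℝ) < 2) (hb2 n)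
      simpa using this
    have hmul : logb 2 (a n * b n) = logb 2 (a n) + logb 2 (b n) :=
      Real.logb_mul (by linarith [ha2 n]) (by linarith [hb2 n])
    have h1 : logb 2 (logb 2 (a n)) ≤ logb 2 (logb 2 (a n * b n)) := by
      rw [hmul]; exact Real.logb_le_logb_of_le h2 (by linarith) (by linarith)
    have h2' : logb 2 (logb 2 (b n)) ≤ logb 2 (logb 2 (a n * b n)) := by
      rw [hmul]; exact Real.logb_le_logb_of_le h2 (by linarith) (by linarith)
    exact max_le (by gcongr) (by gcongr)
  · filter_upwards [eventually_ge_atTop 2] with n hn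
    have hn1 : (1:ℝ) < n := by exact_mod_cast Nat.lt_of_lt_of_le one_lt_two hn
    have hLpos : 0 < logb 2 (n : ℝ) := Real.logb_pos h2 hn1
    have hu : (1:ℝ) ≤ logb 2 (a n) := by
      simpa using Real.logb_le_logb_of_le h2 (by norm_num : (0:ℝ) < 2) (ha2 n)
    have hv : (1:ℝ) ≤ logb 2 (b n) := by
      simpa using Real.logb_le_logb_of_le h2 (by norm_num : (0:ℝ) < 2) (hb2 n)
    have hmul : logb 2 (a n * b n) = logb 2 (a n) + logb 2 (b n) :=
      Real.logb_mul (by linarith [ha2 n]) (by linarith [hb2 n])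
    set M := max (logb 2 (a n)) (logb 2 (b n)) with hM
    have hMpos : (1:ℝ) ≤ M := le_max_of_le_left hu
    have hsum : logb 2 (a n) + logb 2 (b n) ≤ 2 * M := by
      have := le_max_left (logb 2 (a n)) (logb 2 (b n))
      have := le_max_right (logb 2 (a n)) (logb 2 (b n))
      rw [hM]; rcases le_total (logb 2 (a n)) (logb 2 (b n)) with h | h <;> simp [max_eq_right, max_eq_left, h] <;> linarith
    have hkey : logb 2 (logb 2 (a n * b n)) ≤ 1 + logb 2 M := by
      rw [hmul]
      calc logb 2 (logb 2 (a n) + logb 2 (b n)) ≤ logb 2 (2 * M) :=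
            Real.logb_le_logb_of_le h2 (by linarith) hsum
        _ = 1 + logb 2 M := by
            rw [Real.logb_mul (by norm_num) (by linarith)]; simp
    have hMlog : logb 2 M = max (logb 2 (logb 2 (a n))) (logb 2 (logb 2 (b n))) := by
      rw [hM]; rcases le_total (logb 2 (a n)) (logb 2 (b n)) with h | h
      · rw [max_eq_right h, max_eq_right (Real.logb_le_logb_of_le h2 (by linarith) h)]
      · rw [max_eq_left h, max_eq_left (Real.logb_le_logb_of_le h2 (by linarith) h)]
    calc logb 2 (logb 2 (a n * b n)) / logb 2 (n:ℝ) ≤ (1 + logb 2 M) / logb 2 (n:ℝ) := by gcongr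
      _ = max (logb 2 (logb 2 (a n)) / logb 2 (n:ℝ)) (logb 2 (logb 2 (b n)) / logb 2 (n:ℝ))
          + 1 / logb 2 (n:ℝ) := by
            rw [max_div_div_right hLpos.le, ← hMlog, add_div, add_comm]
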